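/- Let H be a Hilbert space and suppose RCRCQ holds at (p̄, x̄), x̄ ∈ C(p̄), for the multifunction C(p) = {x : ⟨x,g_i(p)⟩ = f_i(p), i ∈ I_1; ⟨x,g_i(p)⟩ ≤ f_i(p), i ∈ I_2}, with C(p) ≠ ∅ for p near p̄. Then there exist a subset I_1' ⊂ I_1 with |I_1'| = rank{g_i(p̄) : i ∈ I_1} and a neighbourhood U of p̄ such that for all p ∈ U the vectors g_i(p), i ∈ I_1', are linearly independent and {x : ⟨x,g_i(p)⟩ = f_i(p), i ∈ I_1, ⟨x,g_i(p)⟩ ≤ f_i(p), i ∈ I_2} = {x : ⟨x,g_i(p)⟩ = f_i(p), i ∈ I_1', ⟨x,g_i(p)⟩ ≤ f_i(p), i ∈ I_2}. -/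

import Mathlib

open RealInnerProductSpace

/-- Under RCRCQ, redundant equality constraints can be dropped locally: near `pbar` the set
`C(p)` coincides with the set defined by a linearly independent subfamily `I₁'` of the
equality constraints together with all inequality constraints. -/
theorem stmt_15 {H G : Type*} [NormedAddCommGroup H] [InnerProductSpace ℝ H]
    [CompleteSpace H] [NormedAddCommGroup G] [NormedSpace ℝ G]
    (D : Set G) {ι : Type*} [Fintype ι] (I₁ I₂ : Finset ι)
    (f : ι → G → ℝ) (g : ι → G → H)
    (C : G → Set H)
    (hCdef : ∀ p, C p = {x : H | (∀ i ∈ I₁, ⟪x, g i p⟫ = f i p) ∧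
      (∀ i ∈ I₂, ⟪x, g i p⟫ ≤ f i p)})
    (pbar : G) (hpbar : pbar ∈ D) (xbar : H) (hxbarC : xbar ∈ C pbar)
    (hLip : ∀ i, ∃ K : NNReal, ∃ t ∈ nhdsWithin pbar D,
      LipschitzOnWith K (f i) t ∧ LipschitzOnWith K (g i) t)
    -- RCRCQ at (pbar, xbar)
    (hRCRCQ : ∃ U₀ ∈ nhdsWithin pbar D, ∀ J : Finset ι, I₁ ⊆ J →
      (∀ i ∈ J, (i ∈ I₁ ∨ i ∈ I₂) ∧ ⟪xbar, g i pbar⟫ = f i pbar) →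
      ∀ p ∈ U₀,
        Module.finrank ℝ (Submodule.span ℝ ((fun i => g i p) '' (J : Set ι))) =
        Module.finrank ℝ (Submodule.span ℝ ((fun i => g i pbar) '' (J : Set ι))))
    -- C(p) nonempty near pbar
    (hCne : ∃ U₀ ∈ nhdsWithin pbar D, ∀ p ∈ U₀, (C p).Nonempty) :
    ∃ I₁' ⊆ I₁,
      I₁'.card = Module.finrank ℝ
        (Submodule.span ℝ ((fun i => g i pbar) '' (I₁ : Set ι))) ∧
      ∃ U ∈ nhdsWithin pbar D, ∀ p ∈ U,
        LinearIndependent ℝ (fun i : {i // i ∈ I₁'} => g i.1 p) ∧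
        C p = {x : H | (∀ i ∈ I₁', ⟪x, g i p⟫ = f i p) ∧
          (∀ i ∈ I₂, ⟪x, g i p⟫ ≤ f i p)} := by
  classical
  -- extract data
  obtain ⟨U₀, hU₀, hrank⟩ := hRCRCQ
  obtain ⟨U₁, hU₁, hne⟩ := hCne
  choose K t ht hLf hLg using hLip
  -- choose a linearly independent spanning subfamily at pbar
  set s : Set H := (fun i => g i pbar) '' (I₁ : Set ι) with hs
  obtain ⟨b, hbs, hbspan, hbli⟩ := exists_linearIndependent ℝ s
  have hbfin : b.Finite := (((I₁ : Set ι)).toFinite.image _).subset hbs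
  set bf : Finset H := hbfin.toFinset with hbf
  have hbfmem : ∀ v, v ∈ bf ↔ v ∈ b := fun v => hbfin.mem_toFinset
  have hpickex : ∀ v ∈ bf, ∃ i ∈ I₁, g i pbar = v := by
    intro v hv
    obtain ⟨i, hi, hgi⟩ := hbs ((hbfmem v).1 hv)
    exact ⟨i, hi, hgi⟩
  choose pick hpickI hpickEq using hpickex
  set I₁' : Finset ι := bf.attach.image (fun v => pick v.1 v.2) with hI₁'
  have hsub : I₁' ⊆ I₁ := by
    intro i hi
    simp only [hI₁', Finset.mem_image] at hi
    obtain ⟨v, _, rfl⟩ := hi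
    exact hpickI v.1 v.2
  -- key facts about I₁'
  have hmemb : ∀ i ∈ I₁', g i pbar ∈ b := by
    intro i hi
    simp only [hI₁', Finset.mem_image] at hi
    obtain ⟨v, _, rfl⟩ := hi
    rw [hpickEq v.1 v.2]; exact (hbfmem v.1).1 v.2
  have hinj : ∀ i ∈ I₁', ∀ j ∈ I₁', g i pbar = g j pbar → i = j := by
    intro i hi j hj hij
    simp only [hI₁', Finset.mem_image] at hi hj
    obtain ⟨v, _, rfl⟩ := hi
    obtain ⟨w, _, rfl⟩ := hj
    rw [hpickEq v.1 v.2, hpickEq w.1 w.2] at hij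
    have : v = w := Subtype.ext hij
    subst this; rfl
  -- family at pbar is linearly independent
  have hlibar : LinearIndependent ℝ (fun i : {i // i ∈ I₁'} => g i.1 pbar) := by
    have he : Function.Injective
        (fun i : {i // i ∈ I₁'} => (⟨g i.1 pbar, hmemb i.1 i.2⟩ : b)) := by
      intro i j hij
      exact Subtype.ext (hinj i.1 i.2 j.1 j.2 (congrArg Subtype.val hij))
    exact hbli.comp _ he
  -- image of I₁' under g·pbar is b
  have himgb : (fun i => g i pbar) '' (I₁' : Set ι) = b := by
    apply Set.Subset.antisymm
    · rintro v ⟨i, hi, rfl⟩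
      exact hmemb i hi
    · intro v hv
      have hvbf : v ∈ bf := (hbfmem v).2 hv
      refine ⟨pick v hvbf, ?_, hpickEq v hvbf⟩
      simp only [hI₁', Finset.coe_image, Set.mem_image]
      exact ⟨⟨v, hvbf⟩, by simp, rfl⟩
  have hrange : Set.range (fun i : {i // i ∈ I₁'} => g i.1 pbar)
      = (fun i => g i pbar) '' (I₁' : Set ι) := by
    ext v
    simp [Set.mem_image]
  -- card
  have hcard : I₁'.card = Module.finrank ℝ (Submodule.span ℝ s) := by
    have h1 := finrank_span_eq_card hlibar
    rw [hrange, himgb, hbspan] at h1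
    rw [h1]
    exact (Fintype.card_coe I₁').symm
  -- neighborhood where family stays linearly independent
  set t' : Set G := ⋂ i, t i with ht'def
  have ht' : t' ∈ nhdsWithin pbar D := Filter.iInter_mem.2 ht
  have hΦ : ContinuousWithinAt (fun p => fun i : {i // i ∈ I₁'} => g i.1 p) t' pbar := by
    apply continuousWithinAt_pi.2
    intro i
    have h1 : ContinuousWithinAt (g i.1) (t i.1) pbar :=
      ((hLg i.1).continuousOn) _ (mem_of_mem_nhdsWithin hpbar (ht i.1))
    exact h1.mono (Set.iInter_subset t i.1)
  have hopen : IsOpen {q : {i // i ∈ I₁'} → H | LinearIndependent ℝ q} :=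
    isOpen_setOf_linearIndependent
  have hV : (fun p => fun i : {i // i ∈ I₁'} => g i.1 p) ⁻¹'
      {q | LinearIndependent ℝ q} ∈ nhdsWithin pbar D :=
    nhdsWithin_le_of_mem ht' (hΦ (hopen.mem_nhds hlibar))
  refine ⟨I₁', hsub, hcard, ((fun p => fun i : {i // i ∈ I₁'} => g i.1 p) ⁻¹'
      {q | LinearIndependent ℝ q}) ∩ (U₀ ∩ U₁),
    Filter.inter_mem hV (Filter.inter_mem hU₀ hU₁), ?_⟩
  rintro p ⟨hpV, hp0, hp1⟩
  have hliP : LinearIndependent ℝ (fun i : {i // i ∈ I₁'} => g i.1 p) := hpV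
  refine ⟨hliP, ?_⟩
  -- the set equality
  ext x
  rw [hCdef p]
  simp only [Set.mem_setOf_eq]
  constructor
  · rintro ⟨h1, h2⟩
    exact ⟨fun i hi => h1 i (hsub hi), h2⟩
  · rintro ⟨h1, h2⟩
    refine ⟨?_, h2⟩
    intro j hj
    -- get a point of C p
    obtain ⟨y, hy⟩ := hne p hp1
    rw [hCdef p] at hy
    obtain ⟨hy1, hy2⟩ := hy
    -- span equality at p
    have hle : Submodule.span ℝ ((fun i => g i p) '' (I₁' : Set ι)) ≤
        Submodule.span ℝ ((fun i => g i p) '' (I₁ : Set ι)) :=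
      Submodule.span_mono (Set.image_mono (by exact_mod_cast hsub))
    haveI : FiniteDimensional ℝ (Submodule.span ℝ ((fun i => g i p) '' (I₁ : Set ι))) :=
      FiniteDimensional.span_of_finite ℝ (((I₁ : Set ι)).toFinite.image _)
    have hcardp : Module.finrank ℝ
        (Submodule.span ℝ ((fun i => g i p) '' (I₁' : Set ι))) = I₁'.card := by
      have h3 := finrank_span_eq_card hliP
      have hr : Set.range (fun i : {i // i ∈ I₁'} => g i.1 p)
          = (fun i => g i p) '' (I₁' : Set ι) := by
        ext v; simp [Set.mem_image]
      rw [hr] at h3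
      rw [h3]
      exact Fintype.card_coe I₁'
    have hactive : ∀ i ∈ I₁, (i ∈ I₁ ∨ i ∈ I₂) ∧ ⟪xbar, g i pbar⟫ = f i pbar := by
      intro i hi
      rw [hCdef pbar] at hxbarC
      exact ⟨Or.inl hi, hxbarC.1 i hi⟩
    have hrk := hrank I₁ (le_refl I₁) hactive p hp0
    have hspan_eq : Submodule.span ℝ ((fun i => g i p) '' (I₁' : Set ι)) =
        Submodule.span ℝ ((fun i => g i p) '' (I₁ : Set ι)) := by
      apply Submodule.eq_of_le_of_finrank_eq hle
      rw [hcardp, hrk, ← hs, ← hcard]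
    have hmem : g j p ∈ Submodule.span ℝ ((fun i => g i p) '' (I₁' : Set ι)) := by
      rw [hspan_eq]
      exact Submodule.subset_span ⟨j, hj, rfl⟩
    have key : Submodule.span ℝ ((fun i => g i p) '' (I₁' : Set ι)) ≤
        LinearMap.ker ((innerSL ℝ (x - y) : H →L[ℝ] ℝ) : H →ₗ[ℝ] ℝ) := by
      rw [Submodule.span_le]
      rintro v ⟨i, hi, rfl⟩
      have hi' : i ∈ I₁' := by exact_mod_cast hi
      have hxi := h1 i hi'
      have hyi := hy1 i (hsub hi')
      simp only [SetLike.mem_coe, LinearMap.mem_ker, ContinuousLinearMap.coe_coe, innerSL_apply_apply]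
      rw [inner_sub_left, hxi, hyi, sub_self]
    have hz : ⟪x - y, g j p⟫ = 0 := key hmem
    rw [inner_sub_left, sub_eq_zero] at hz
    rw [hz]
    exact hy1 j hj
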